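/- For n = 2m+1 odd, Σ_{σ ∈ S_n} (-1)^{ℓ(σ)} x^{L(σ)} = Π_{j=1}^{m} (1 - x^{2j}), and for n = 2m even, Σ_{σ ∈ S_n} (-1)^{ℓ(σ)} x^{L(σ)} = (1 - x^m) Π_{j=1}^{m-1} (1 - x^{2j}). -/

import Mathlib

open Finset Polynomial
open scoped Classical

/-- Number of inversions (Coxeter length) of a permutation of `Fin n`. -/
def ellA (n : ℕ) (σ : Equiv.Perm (Fin n)) : ℕ :=
  (Finset.univ.filter (fun p : Fin n × Fin n => p.1 < p.2 ∧ σ p.2 < σ p.1)).card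

/-- The odd length: inversions `(i,j)` with `i ≢ j (mod 2)`. -/
def oddLA (n : ℕ) (σ : Equiv.Perm (Fin n)) : ℕ :=
  (Finset.univ.filter (fun p : Fin n × Fin n =>
    p.1 < p.2 ∧ σ p.2 < σ p.1 ∧ (p.1 : ℕ) % 2 ≠ (p.2 : ℕ) % 2)).card

/-- Membership in the right quotient `S_n^I` (generators indexed 1-based by `I ⊆ [n-1]`):
no descent at any position of `I`. Position `k ∈ I` (1-based) compares the values at the
0-based positions `k-1` and `k`. -/
def inQuotA (n : ℕ) (I : Finset ℕ) (σ : Equiv.Perm (Fin n)) : Prop :=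
  ∀ i j : Fin n, (j : ℕ) = (i : ℕ) + 1 → (i : ℕ) + 1 ∈ I → σ i < σ j

/-- Even chessboard elements: `i + σ(i)` is even for all `i` (0- or 1-based is equivalent). -/
def chessPlus (n : ℕ) (σ : Equiv.Perm (Fin n)) : Prop :=
  ∀ i : Fin n, ((i : ℕ) + (σ i : ℕ)) % 2 = 0

/-- Odd chessboard elements: `i + σ(i)` is odd for all `i`. -/
def chessMinus (n : ℕ) (σ : Equiv.Perm (Fin n)) : Prop :=
  ∀ i : Fin n, ((i : ℕ) + (σ i : ℕ)) % 2 = 1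

/-- Signed generating function `∑ (-1)^{ℓ(σ)} x^{L(σ)}` over the permutations satisfying `P`. -/
noncomputable def gfA (n : ℕ) (P : Equiv.Perm (Fin n) → Prop) : Polynomial ℤ :=
  ∑ σ : Equiv.Perm (Fin n),
    if P σ then (-1 : Polynomial ℤ) ^ (ellA n σ) * X ^ (oddLA n σ) else 0

-- ## my defs
def evset (n : ℕ) : Finset (Fin n) := Finset.univ.filter (fun i => (i : ℕ) % 2 = 0)

def eim {n : ℕ} (σ : Equiv.Perm (Fin n)) : Finset ℕ :=
  (evset n).image (fun i => (σ i : ℕ))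

noncomputable def Qcl (n : ℕ) (E : Finset ℕ) : Polynomial ℤ :=
  gfA n (fun σ => eim σ = E)

def EvensF (n : ℕ) : Finset ℕ := (Finset.range n).filter (fun u => u % 2 = 0)
def OddsF (n : ℕ) : Finset ℕ := (Finset.range n).filter (fun u => u % 2 = 1)

def innerE (E : Finset ℕ) (v : ℕ) (n : ℕ) : Finset ℕ :=
  (Finset.range n) \ ((E.erase v).image (fun u => if u < v then u else u - 1))

-- ## basic lemmas
lemma eim_subset_range {n : ℕ} (σ : Equiv.Perm (Fin n)) : eim σ ⊆ Finset.range n := by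
  intro x hx
  simp only [eim, Finset.mem_image] at hx
  obtain ⟨i, _, rfl⟩ := hx
  simp [Fin.is_lt]

lemma eim_card {n : ℕ} (σ : Equiv.Perm (Fin n)) : (eim σ).card = (evset n).card := by
  apply Finset.card_image_of_injective
  exact fun a b h => σ.injective (Fin.val_injective h)

lemma mem_eim_iff {n : ℕ} (σ : Equiv.Perm (Fin n)) (u : ℕ) :
    u ∈ eim σ ↔ ∃ i ∈ evset n, (σ i : ℕ) = u := by
  simp [eim]

lemma mem_innerE {E : Finset ℕ} {v n x : ℕ} :
    x ∈ innerE E v n ↔ x < n ∧ ¬((x < v ∧ x ∈ E) ∨ (v ≤ x ∧ x + 1 ∈ E)) := by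
  simp only [innerE, Finset.mem_sdiff, Finset.mem_range, Finset.mem_image, Finset.mem_erase]
  constructor
  · rintro ⟨hx, hni⟩
    refine ⟨hx, ?_⟩
    rintro (⟨h1, h2⟩ | ⟨h1, h2⟩)
    · exact hni ⟨x, ⟨by omega, h2⟩, by simp [h1]⟩
    · exact hni ⟨x + 1, ⟨by omega, h2⟩, by simp [show ¬ (x+1 < v) by omega]⟩
  · rintro ⟨hx, hno⟩
    refine ⟨hx, ?_⟩
    rintro ⟨u, ⟨huv, huE⟩, hfu⟩
    by_cases h : u < v
    · subst hfu; simp only [if_pos h] at *; exact hno (Or.inl ⟨h, huE⟩)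
    · have : u = x + 1 := by simp only [if_neg h] at hfu; omega
      subst this
      exact hno (Or.inr ⟨by omega, huE⟩)

lemma cardEvensAux : ∀ n : ℕ, (EvensF n).card = (n+1)/2 ∧ (OddsF n).card = n/2 := by
  intro n
  induction n with
  | zero => simp [EvensF, OddsF]
  | succ k ih =>
    have he : EvensF (k+1) = if k % 2 = 0 then insert k (EvensF k) else EvensF k := by
      split_ifs with h <;> (ext x; simp [EvensF, Finset.mem_range, Finset.mem_insert]; omega)
    have ho : OddsF (k+1) = if k % 2 = 1 then insert k (OddsF k) else OddsF k := by
      split_ifs with h <;> (ext x; simp [OddsF, Finset.mem_range, Finset.mem_insert]; omega)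
    have hkE : k ∉ EvensF k := by simp [EvensF]
    have hkO : k ∉ OddsF k := by simp [OddsF]
    obtain ⟨ih1, ih2⟩ := ih
    rcases Nat.even_or_odd k with hk | hk
    · have h2 : k % 2 = 0 := Nat.even_iff.mp hk
      rw [he, ho, if_pos h2, if_neg (by omega), Finset.card_insert_of_notMem hkE]
      omega
    · have h2 : k % 2 = 1 := Nat.odd_iff.mp hk
      rw [he, ho, if_neg (by omega), if_pos h2, Finset.card_insert_of_notMem hkO]
      omega
  
lemma cardEvensF (n : ℕ) : (EvensF n).card = (n+1)/2 := (cardEvensAux n).1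
lemma cardOddsF (n : ℕ) : (OddsF n).card = n/2 := (cardEvensAux n).2

lemma evset_card (n : ℕ) : (evset n).card = (n+1)/2 := by
  have : Finset.image Fin.val (evset n) = EvensF n := by
    ext x; simp [evset, EvensF]
    constructor
    · rintro ⟨i, hi, rfl⟩; exact ⟨i.is_lt, hi⟩
    · rintro ⟨hx, hp⟩; exact ⟨⟨x, hx⟩, hp, rfl⟩
  rw [← cardEvensF n, ← this, Finset.card_image_of_injective _ Fin.val_injective]

lemma Qcl_vacuous {n : ℕ} {E : Finset ℕ} (h : ∀ σ : Equiv.Perm (Fin n), eim σ ≠ E) :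
    Qcl n E = 0 := by
  unfold Qcl gfA
  exact Finset.sum_eq_zero (fun σ _ => if_neg (h σ))

lemma Qcl_card_ne {n : ℕ} {E : Finset ℕ} (h : E.card ≠ (n+1)/2) : Qcl n E = 0 := by
  apply Qcl_vacuous
  intro σ hσ
  rw [← hσ, eim_card, evset_card] at h
  exact h rfl
lemma swap_lt_iff {n : ℕ} {a b : Fin n} (hb : (b:ℕ) = (a:ℕ)+1) {x y : Fin n}
    (h1 : ¬(x = a ∧ y = b)) (h2 : ¬(x = b ∧ y = a)) :
    (Equiv.swap a b x < Equiv.swap a b y ↔ x < y) := by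
  by_cases hxa : x = a
  · subst hxa
    by_cases hyb : y = b
    · exact absurd ⟨rfl, hyb⟩ h1
    · by_cases hya : y = x
      · subst hya; exact iff_of_false (lt_irrefl _) (lt_irrefl _)
      · have hya' : (y:ℕ) ≠ (x:ℕ) := fun h => hya (Fin.ext h)
        have hyb' : (y:ℕ) ≠ (b:ℕ) := fun h => hyb (Fin.ext h)
        rw [Equiv.swap_apply_left, Equiv.swap_apply_of_ne_of_ne hya hyb, Fin.lt_def, Fin.lt_def]
        omega
  · by_cases hxb : x = b
    · subst hxb
      by_cases hya : y = a
      · exact absurd ⟨rfl, hya⟩ h2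
      · by_cases hyb : y = x
        · subst hyb; exact iff_of_false (lt_irrefl _) (lt_irrefl _)
        · have hya' : (y:ℕ) ≠ (a:ℕ) := fun h => hya (Fin.ext h)
          have hyb' : (y:ℕ) ≠ (x:ℕ) := fun h => hyb (Fin.ext h)
          rw [Equiv.swap_apply_right, Equiv.swap_apply_of_ne_of_ne hya hyb, Fin.lt_def, Fin.lt_def]
          omega
    · have hxa' : (x:ℕ) ≠ (a:ℕ) := fun h => hxa (Fin.ext h)
      have hxb' : (x:ℕ) ≠ (b:ℕ) := fun h => hxb (Fin.ext h)
      rw [Equiv.swap_apply_of_ne_of_ne hxa hxb]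
      by_cases hya : y = a
      · subst hya
        rw [Equiv.swap_apply_left, Fin.lt_def, Fin.lt_def]
        omega
      · by_cases hyb : y = b
        · subst hyb
          rw [Equiv.swap_apply_right, Fin.lt_def, Fin.lt_def]
          omega
        · rw [Equiv.swap_apply_of_ne_of_ne hya hyb]

lemma swap_status {n : ℕ} (σ : Equiv.Perm (Fin n)) {a b : Fin n} (hb : (b:ℕ) = (a:ℕ)+1)
    {p : Fin n × Fin n} (h1 : ¬(p.1 = σ⁻¹ b ∧ p.2 = σ⁻¹ a)) (h2 : ¬(p.1 = σ⁻¹ a ∧ p.2 = σ⁻¹ b)) :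
    ((Equiv.swap a b * σ) p.2 < (Equiv.swap a b * σ) p.1 ↔ σ p.2 < σ p.1) := by
  simp only [Equiv.Perm.mul_apply]
  apply swap_lt_iff hb
  · rintro ⟨e1, e2⟩
    exact h1 ⟨Equiv.Perm.eq_inv_iff_eq.mpr e2, Equiv.Perm.eq_inv_iff_eq.mpr e1⟩
  · rintro ⟨e1, e2⟩
    exact h2 ⟨Equiv.Perm.eq_inv_iff_eq.mpr e2, Equiv.Perm.eq_inv_iff_eq.mpr e1⟩

lemma ellA_swap_lt {n : ℕ} (σ : Equiv.Perm (Fin n)) {a b : Fin n} (hb : (b:ℕ) = (a:ℕ)+1)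
    (hlt : σ⁻¹ a < σ⁻¹ b) : ellA n (Equiv.swap a b * σ) = ellA n σ + 1 := by
  classical
  have hσi : σ (σ⁻¹ a) = a := (σ.apply_symm_apply a : σ (σ⁻¹ a) = a)
  have hσj : σ (σ⁻¹ b) = b := (σ.apply_symm_apply b : σ (σ⁻¹ b) = b)
  have hτi : (Equiv.swap a b * σ) (σ⁻¹ a) = b := by
    rw [Equiv.Perm.mul_apply, hσi, Equiv.swap_apply_left]
  have hτj : (Equiv.swap a b * σ) (σ⁻¹ b) = a := by
    rw [Equiv.Perm.mul_apply, hσj, Equiv.swap_apply_right]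
  have hFeq : (Finset.univ.filter (fun p : Fin n × Fin n =>
      p.1 < p.2 ∧ (Equiv.swap a b * σ) p.2 < (Equiv.swap a b * σ) p.1))
      = insert (σ⁻¹ a, σ⁻¹ b)
        (Finset.univ.filter (fun p : Fin n × Fin n => p.1 < p.2 ∧ σ p.2 < σ p.1)) := by
    ext p
    simp only [Finset.mem_filter, Finset.mem_insert, Finset.mem_univ, true_and]
    by_cases hp : p = (σ⁻¹ a, σ⁻¹ b)
    · subst hp
      refine iff_of_true ⟨hlt, ?_⟩ (Or.inl rfl)
      show (Equiv.swap a b * σ) (σ⁻¹ b) < (Equiv.swap a b * σ) (σ⁻¹ a)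
      rw [hτi, hτj, Fin.lt_def]; omega
    · by_cases hq : p = (σ⁻¹ b, σ⁻¹ a)
      · subst hq
        have hnl : ¬ ((σ⁻¹ b) < (σ⁻¹ a)) := not_lt.mpr (le_of_lt hlt)
        refine iff_of_false (fun hc => hnl hc.1) ?_
        rintro (hc | hc)
        · obtain ⟨e1, e2⟩ := Prod.ext_iff.mp hc
          simp only [] at e1 e2
          rw [e1] at hlt
          rw [e2] at hlt
          exact absurd hlt (lt_irrefl _)
        · exact hnl hc.1
      · have h1 : ¬(p.1 = σ⁻¹ b ∧ p.2 = σ⁻¹ a) := fun ⟨e1, e2⟩ => hq (Prod.ext e1 e2)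
        have h2 : ¬(p.1 = σ⁻¹ a ∧ p.2 = σ⁻¹ b) := fun ⟨e1, e2⟩ => hp (Prod.ext e1 e2)
        rw [swap_status σ hb h1 h2]
        constructor
        · exact fun h => Or.inr h
        · rintro (h | h)
          · exact absurd h hp
          · exact h
  have hnm : (σ⁻¹ a, σ⁻¹ b) ∉
      (Finset.univ.filter (fun p : Fin n × Fin n => p.1 < p.2 ∧ σ p.2 < σ p.1)) := by
    simp only [Finset.mem_filter, Finset.mem_univ, true_and, not_and]
    intro _
    show ¬ (σ (σ⁻¹ b) < σ (σ⁻¹ a))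
    rw [hσi, hσj, Fin.lt_def, not_lt]; omega
  unfold ellA
  rw [hFeq, Finset.card_insert_of_notMem hnm]

lemma oddLA_swap {n : ℕ} (σ : Equiv.Perm (Fin n)) {a b : Fin n} (hb : (b:ℕ) = (a:ℕ)+1)
    (hpar : ((σ⁻¹ a : Fin n) : ℕ) % 2 = ((σ⁻¹ b : Fin n) : ℕ) % 2) :
    oddLA n (Equiv.swap a b * σ) = oddLA n σ := by
  unfold oddLA
  congr 1
  ext p
  simp only [Finset.mem_filter, Finset.mem_univ, true_and]
  by_cases hp : p = (σ⁻¹ a, σ⁻¹ b)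
  · subst hp
    simp only []
    constructor
    · rintro ⟨h1, h2, h3⟩; exact absurd hpar h3
    · rintro ⟨h1, h2, h3⟩; exact absurd hpar h3
  · by_cases hq : p = (σ⁻¹ b, σ⁻¹ a)
    · subst hq
      constructor
      · rintro ⟨h1, h2, h3⟩; exact absurd hpar.symm h3
      · rintro ⟨h1, h2, h3⟩; exact absurd hpar.symm h3
    · have h1 : ¬(p.1 = σ⁻¹ b ∧ p.2 = σ⁻¹ a) := fun ⟨e1, e2⟩ => hq (Prod.ext e1 e2)
      have h2 : ¬(p.1 = σ⁻¹ a ∧ p.2 = σ⁻¹ b) := fun ⟨e1, e2⟩ => hp (Prod.ext e1 e2)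
      rw [swap_status σ hb h1 h2]

lemma neg_one_pow_swap {n : ℕ} (σ : Equiv.Perm (Fin n)) {a b : Fin n} (hb : (b:ℕ) = (a:ℕ)+1) :
    (-1 : Polynomial ℤ) ^ ellA n (Equiv.swap a b * σ) = -((-1) ^ ellA n σ) := by
  have hab : a ≠ b := by
    intro h; rw [h] at hb; omega
  have hij : σ⁻¹ a ≠ σ⁻¹ b := fun h => hab ((σ⁻¹).injective h)
  rcases lt_or_gt_of_ne hij with h | h
  · rw [ellA_swap_lt σ hb h, pow_succ]; ring
  · have hτ : Equiv.swap a b * (Equiv.swap a b * σ) = σ := by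
      rw [← mul_assoc, Equiv.swap_mul_self, one_mul]
    have hinv : (Equiv.swap a b * σ)⁻¹ a = σ⁻¹ b := by
      rw [mul_inv_rev, Equiv.Perm.mul_apply]
      congr 1
      rw [Equiv.swap_inv, Equiv.swap_apply_left]
    have hinv2 : (Equiv.swap a b * σ)⁻¹ b = σ⁻¹ a := by
      rw [mul_inv_rev, Equiv.Perm.mul_apply]
      congr 1
      rw [Equiv.swap_inv, Equiv.swap_apply_right]
    have h2 := ellA_swap_lt (Equiv.swap a b * σ) hb (by rw [hinv, hinv2]; exact h)
    rw [hτ] at h2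
    rw [h2, pow_succ]; ring


def sN (u : ℕ) (x : ℕ) : ℕ := if x = u then u+1 else if x = u+1 then u else x

lemma sN_invol (u x : ℕ) : sN u (sN u x) = x := by
  unfold sN; split_ifs <;> omega

lemma swap_val {n : ℕ} {a b : Fin n} (hb : (b:ℕ) = (a:ℕ)+1) (y : Fin n) :
    ((Equiv.swap a b y : Fin n) : ℕ) = sN (a:ℕ) (y:ℕ) := by
  unfold sN
  by_cases hya : y = a
  · subst hya
    rw [Equiv.swap_apply_left, if_pos rfl]
    exact hb
  · by_cases hyb : y = b
    · subst hyb
      rw [Equiv.swap_apply_right, if_neg (by omega), if_pos (by omega)]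
    · have hya' : (y:ℕ) ≠ (a:ℕ) := fun h => hya (Fin.ext h)
      have hyb' : (y:ℕ) ≠ (b:ℕ) := fun h => hyb (Fin.ext h)
      rw [Equiv.swap_apply_of_ne_of_ne hya hyb, if_neg hya', if_neg (by omega)]

lemma image_sN_self {E : Finset ℕ} {u : ℕ} (hE : u ∈ E ↔ u+1 ∈ E) :
    E.image (sN u) = E := by
  have hm : ∀ y ∈ E, sN u y ∈ E := by
    intro y hy
    unfold sN
    split_ifs with h1 h2
    · exact hE.mp (h1 ▸ hy)
    · exact hE.mpr (h2 ▸ hy)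
    · exact hy
  apply Finset.Subset.antisymm
  · rw [Finset.image_subset_iff]; exact hm
  · intro x hx
    rw [Finset.mem_image]
    exact ⟨sN u x, hm x hx, sN_invol u x⟩

lemma eim_swap {n : ℕ} {a b : Fin n} (hb : (b:ℕ) = (a:ℕ)+1) {E : Finset ℕ}
    (hE : (a:ℕ) ∈ E ↔ (a:ℕ)+1 ∈ E) (σ : Equiv.Perm (Fin n)) (h : eim σ = E) :
    eim (Equiv.swap a b * σ) = E := by
  have : eim (Equiv.swap a b * σ) = (eim σ).image (sN (a:ℕ)) := by
    unfold eim
    rw [Finset.image_image]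
    apply Finset.image_congr
    intro i _
    exact swap_val hb (σ i)
  rw [this, h, image_sN_self hE]

lemma mem_eim_inv {n : ℕ} (σ : Equiv.Perm (Fin n)) (a : Fin n) :
    (a:ℕ) ∈ eim σ ↔ σ⁻¹ a ∈ evset n := by
  rw [mem_eim_iff]
  constructor
  · rintro ⟨i, hi, hv⟩
    have : σ i = a := Fin.ext hv
    rw [← this, show σ⁻¹ (σ i) = i from σ.symm_apply_apply i]
    exact hi
  · intro h
    exact ⟨σ⁻¹ a, h, congrArg Fin.val (σ.apply_symm_apply a : σ (σ⁻¹ a) = a)⟩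

lemma swap_zero {n : ℕ} {E : Finset ℕ} {u : ℕ} (hu : u + 1 < n) (hE : u ∈ E ↔ u + 1 ∈ E) :
    Qcl n E = 0 := by
  have hun : u < n := by omega
  set a : Fin n := ⟨u, hun⟩ with ha
  set b : Fin n := ⟨u+1, hu⟩ with hbdef
  have hb : (b:ℕ) = (a:ℕ)+1 := rfl
  have hE' : (a:ℕ) ∈ E ↔ (a:ℕ)+1 ∈ E := hE
  unfold Qcl gfA
  apply Finset.sum_involution (fun σ _ => Equiv.swap a b * σ)
  · intro σ _
    by_cases h : eim σ = E
    · rw [if_pos h, if_pos (eim_swap hb hE' σ h)]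
      have hpar : ((σ⁻¹ a : Fin n) : ℕ) % 2 = ((σ⁻¹ b : Fin n) : ℕ) % 2 := by
        have h1 : (a:ℕ) ∈ E ↔ σ⁻¹ a ∈ evset n := h ▸ mem_eim_inv σ a
        have h2 : (b:ℕ) ∈ E ↔ σ⁻¹ b ∈ evset n := h ▸ mem_eim_inv σ b
        have h3 : σ⁻¹ a ∈ evset n ↔ σ⁻¹ b ∈ evset n := by
          rw [← h1, ← h2]
          show ((u:ℕ) ∈ E ↔ (u+1:ℕ) ∈ E)
          exact hE
        simp only [evset, Finset.mem_filter, Finset.mem_univ, true_and] at h3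
        omega
      rw [neg_one_pow_swap σ hb, oddLA_swap σ hb hpar]
      ring
    · rw [if_neg h, if_neg ?_]
      · ring
      · intro hc
        apply h
        have := eim_swap hb hE' (Equiv.swap a b * σ) hc
        rwa [← mul_assoc, Equiv.swap_mul_self, one_mul] at this
  · intro σ _ _
    intro hc
    have : (Equiv.swap a b * σ) (σ⁻¹ a) = σ (σ⁻¹ a) := by rw [hc]
    rw [Equiv.Perm.mul_apply, show σ (σ⁻¹ a) = a from σ.apply_symm_apply a, Equiv.swap_apply_left] at this
    have : (b:ℕ) = (a:ℕ) := congrArg Fin.val this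
    omega
  · intro σ _
    exact Finset.mem_univ _
  · intro σ _
    rw [← mul_assoc, Equiv.swap_mul_self, one_mul]

lemma gfA_partition (n : ℕ) :
    gfA n (fun _ => True) = ∑ E ∈ (Finset.range n).powerset, Qcl n E := by
  unfold Qcl gfA
  rw [Finset.sum_comm]
  apply Finset.sum_congr rfl
  intro σ _
  rw [if_pos trivial]
  refine ((Finset.sum_eq_single_of_mem (eim σ) (Finset.mem_powerset.mpr (eim_subset_range σ)) ?_).trans ?_).symm
  · intro E _ hne
    exact if_neg (fun h => hne h.symm)
  · exact if_pos rfl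

lemma classify {n : ℕ} {E : Finset ℕ} (hEr : E ⊆ Finset.range n)
    (h1 : E ≠ EvensF n) (h2 : E ≠ OddsF n) :
    ∃ u, u + 1 < n ∧ (u ∈ E ↔ u + 1 ∈ E) := by
  by_contra hc
  push_neg at hc
  have hc' : ∀ u, u + 1 < n → ((u + 1 ∈ E) ↔ ¬ (u ∈ E)) := by
    intro u hu
    have := hc u hu
    tauto
  have key : ∀ x, x < n → (x ∈ E ↔ (x % 2 = if 0 ∈ E then 0 else 1)) := by
    intro x
    induction x with
    | zero =>
      intro _
      by_cases h0 : 0 ∈ E <;> simp [h0]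
    | succ k ih =>
      intro hk
      have hiff := ih (by omega)
      have hflip := hc' k hk
      rw [hflip, hiff]
      by_cases h0 : 0 ∈ E <;> simp [h0] <;> omega
  by_cases h0 : (0:ℕ) ∈ E
  · apply h1
    ext x
    constructor
    · intro hx
      have hxn : x < n := Finset.mem_range.mp (hEr hx)
      have := (key x hxn).mp hx
      rw [if_pos h0] at this
      simp [EvensF, hxn, this]
    · intro hx
      simp only [EvensF, Finset.mem_filter, Finset.mem_range] at hx
      refine (key x hx.1).mpr ?_
      rw [if_pos h0]; exact hx.2
  · apply h2
    ext x
    constructor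
    · intro hx
      have hxn : x < n := Finset.mem_range.mp (hEr hx)
      have := (key x hxn).mp hx
      rw [if_neg h0] at this
      simp [OddsF, hxn, this]
    · intro hx
      simp only [OddsF, Finset.mem_filter, Finset.mem_range] at hx
      refine (key x hx.1).mpr ?_
      rw [if_neg h0]; exact hx.2

lemma F_eq_P_add_M {n : ℕ} (hn : 1 ≤ n) :
    gfA n (fun _ => True) = Qcl n (EvensF n) + Qcl n (OddsF n) := by
  rw [gfA_partition]
  have hEO : EvensF n ≠ OddsF n := by
    intro h
    have h0 : (0:ℕ) ∈ EvensF n := by simp [EvensF]; omega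
    rw [h] at h0
    simp [OddsF] at h0
  have hsub : ({EvensF n, OddsF n} : Finset (Finset ℕ)) ⊆ (Finset.range n).powerset := by
    intro E hE
    rcases Finset.mem_insert.mp hE with h | h
    · subst h; exact Finset.mem_powerset.mpr (Finset.filter_subset _ _)
    · rw [Finset.mem_singleton.mp h]
      exact Finset.mem_powerset.mpr (Finset.filter_subset _ _)
  rw [← Finset.sum_subset hsub ?_, Finset.sum_pair hEO]
  intro E hEp hEn
  have h1 : E ≠ EvensF n := fun h => hEn (by rw [h]; exact Finset.mem_insert_self _ _)
  have h2 : E ≠ OddsF n := fun h => hEn (by rw [h]; simp)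
  obtain ⟨u, hu, hiff⟩ := classify (Finset.mem_powerset.mp hEp) h1 h2
  exact swap_zero hu hiff

noncomputable def ins {n : ℕ} (v : Fin (n+1)) (w : Equiv.Perm (Fin n)) :
    Equiv.Perm (Fin (n+1)) :=
  (finSuccEquiv n).trans (w.optionCongr.trans (finSuccEquiv' v).symm)

lemma ins_zero {n : ℕ} (v : Fin (n+1)) (w : Equiv.Perm (Fin n)) : ins v w 0 = v := by
  simp [ins, Equiv.trans_apply, finSuccEquiv_zero, Equiv.optionCongr_apply,
    finSuccEquiv'_symm_none]

lemma ins_succ {n : ℕ} (v : Fin (n+1)) (w : Equiv.Perm (Fin n)) (j : Fin n) :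
    ins v w j.succ = v.succAbove (w j) := by
  simp [ins, Equiv.trans_apply, finSuccEquiv_succ, Equiv.optionCongr_apply,
    finSuccEquiv'_symm_some]

lemma succAbove_val {n : ℕ} (v : Fin (n+1)) (y : Fin n) :
    ((v.succAbove y : Fin (n+1)) : ℕ) = if (y:ℕ) < (v:ℕ) then (y:ℕ) else (y:ℕ)+1 := by
  rw [Fin.succAbove]
  have hc : (y.castSucc < v) ↔ ((y:ℕ) < (v:ℕ)) := by rw [Fin.lt_def, Fin.coe_castSucc]
  split_ifs with h1 h2 h2
  · exact Fin.coe_castSucc y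
  · exact absurd (hc.mp h1) h2
  · exact absurd (hc.mpr h2) h1
  · exact Fin.val_succ y

lemma ins_bijective (n : ℕ) :
    Function.Bijective (fun p : Fin (n+1) × Equiv.Perm (Fin n) => ins p.1 p.2) := by
  rw [Fintype.bijective_iff_injective_and_card]
  constructor
  · rintro ⟨v, w⟩ ⟨v', w'⟩ h
    simp only [] at h
    have h0 : v = v' := by rw [← ins_zero v w, ← ins_zero v' w', h]
    subst h0
    have hw : w = w' := by
      apply Equiv.ext
      intro j
      have h2 : ins v w j.succ = ins v w' j.succ := by rw [h]
      rw [ins_succ, ins_succ] at h2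
      exact Fin.succAbove_right_injective h2
    rw [hw]
  · simp [Fintype.card_prod, Fintype.card_perm, Fintype.card_fin, Nat.factorial_succ]

lemma card_lt_filter (n : ℕ) (c : ℕ) (hc : c ≤ n) :
    (Finset.univ.filter (fun y : Fin n => (y:ℕ) < c)).card = c := by
  have himg : (Finset.univ.filter (fun y : Fin n => (y:ℕ) < c)).image Fin.val
      = Finset.range c := by
    ext x
    simp only [Finset.mem_image, Finset.mem_filter, Finset.mem_univ, true_and,
      Finset.mem_range]
    constructor
    · rintro ⟨y, hy, rfl⟩; exact hy
    · intro hx; exact ⟨⟨x, by omega⟩, hx, rfl⟩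
  rw [← Finset.card_image_of_injective
    (Finset.univ.filter (fun y : Fin n => (y:ℕ) < c)) Fin.val_injective, himg,
    Finset.card_range]

lemma card_perm_filter {n : ℕ} (w : Equiv.Perm (Fin n)) (p : Fin n → Prop) :
    (Finset.univ.filter (fun j => p (w j))).card = (Finset.univ.filter p).card := by
  apply Finset.card_bij (fun j _ => w j)
  · intro j hj
    simp only [Finset.mem_filter, Finset.mem_univ, true_and] at hj ⊢
    exact hj
  · intro j1 h1 j2 h2 h
    exact w.injective h
  · intro y hy
    simp only [Finset.mem_filter, Finset.mem_univ, true_and] at hy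
    refine ⟨w⁻¹ y, ?_, (w.apply_symm_apply y : w (w⁻¹ y) = y)⟩
    simp only [Finset.mem_filter, Finset.mem_univ, true_and, show w (w⁻¹ y) = y from w.apply_symm_apply y]
    exact hy

lemma sum_ind_lt : ∀ (n c : ℕ), c ≤ n →
    (∑ j : Fin n, if ((j:ℕ) < c) then (1:ℕ) else 0) = c := by
  intro n
  induction n with
  | zero => intro c hc; interval_cases c; simp
  | succ k ih =>
    intro c hc
    rw [Fin.sum_univ_castSucc]
    simp only [Fin.coe_castSucc, Fin.val_last]
    by_cases h : c ≤ k
    · rw [ih c h, if_neg (by omega)]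
      omega
    · have hc' : c = k + 1 := by omega
      subst hc'
      have h2 : (∑ x : Fin k, if ((x:ℕ) < k + 1) then (1:ℕ) else 0)
          = ∑ x : Fin k, if ((x:ℕ) < k) then (1:ℕ) else 0 := by
        apply Finset.sum_congr rfl
        intro x _
        rw [if_pos (by omega), if_pos x.is_lt]
      rw [h2, ih k (le_refl k), if_pos (by omega)]

lemma ellA_ins {n : ℕ} (v : Fin (n+1)) (w : Equiv.Perm (Fin n)) :
    ellA (n+1) (ins v w) = (v:ℕ) + ellA n w := by
  have hlt0 : ∀ j : Fin n, ((ins v w) j.succ < (ins v w) 0 ↔ (w j : ℕ) < (v:ℕ)) := by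
    intro j
    rw [ins_zero, ins_succ, Fin.lt_def, succAbove_val]
    split_ifs with h
    · exact ⟨fun _ => h, fun _ => h⟩
    · exact ⟨fun hc => by omega, fun hc => by omega⟩
  have hltss : ∀ i j : Fin n, ((ins v w) j.succ < (ins v w) i.succ ↔ w j < w i) := by
    intro i j
    rw [ins_succ, ins_succ]
    exact Fin.succAbove_lt_succAbove_iff
  have hprod : ellA n w
      = ∑ i : Fin n, ∑ j : Fin n, (if (i < j ∧ w j < w i) then (1:ℕ) else 0) := by
    unfold ellA
    rw [Finset.card_filter, Fintype.sum_prod_type]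
  have hexp : ellA (n+1) (ins v w)
      = (∑ j : Fin (n+1), if ((0:Fin (n+1)) < j ∧ (ins v w) j < (ins v w) 0)
          then (1:ℕ) else 0)
        + ∑ i : Fin n, ∑ j : Fin (n+1),
            (if (i.succ < j ∧ (ins v w) j < (ins v w) i.succ) then (1:ℕ) else 0) := by
    unfold ellA
    rw [Finset.card_filter, Fintype.sum_prod_type, Fin.sum_univ_succ]
  have hrow0 : (∑ j : Fin (n+1),
      if ((0:Fin (n+1)) < j ∧ (ins v w) j < (ins v w) 0) then (1:ℕ) else 0) = (v:ℕ) := by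
    rw [Fin.sum_univ_succ, if_neg (by simp)]
    have h2 : (∑ j : Fin n,
        if ((0:Fin (n+1)) < j.succ ∧ (ins v w) j.succ < (ins v w) 0) then (1:ℕ) else 0)
        = ∑ j : Fin n, if ((w j : ℕ) < (v:ℕ)) then (1:ℕ) else 0 := by
      apply Finset.sum_congr rfl
      intro j _
      apply if_congr _ rfl rfl
      constructor
      · rintro ⟨-, h⟩; exact (hlt0 j).mp h
      · intro h; exact ⟨Fin.succ_pos j, (hlt0 j).mpr h⟩
    rw [zero_add, h2]
    rw [Fintype.sum_equiv w _ (fun y : Fin n => if ((y:ℕ) < (v:ℕ)) then (1:ℕ) else 0)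
      (fun j => rfl)]
    exact sum_ind_lt n (v:ℕ) (Fin.is_le v)
  have hrows : (∑ i : Fin n, ∑ j : Fin (n+1),
      (if (i.succ < j ∧ (ins v w) j < (ins v w) i.succ) then (1:ℕ) else 0))
      = ∑ i : Fin n, ∑ j : Fin n, (if (i < j ∧ w j < w i) then (1:ℕ) else 0) := by
    apply Finset.sum_congr rfl
    intro i _
    rw [Fin.sum_univ_succ, if_neg (by simp), zero_add]
    apply Finset.sum_congr rfl
    intro j _
    apply if_congr _ rfl rfl
    rw [Fin.succ_lt_succ_iff, hltss i j]
  rw [hexp, hrow0, hrows, ← hprod]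

lemma oddLA_ins {n : ℕ} (v : Fin (n+1)) (w : Equiv.Perm (Fin n)) :
    oddLA (n+1) (ins v w) =
      (Finset.univ.filter (fun j : Fin n => (w j:ℕ) < (v:ℕ) ∧ (j:ℕ) % 2 = 0)).card
        + oddLA n w := by
  have hlt0 : ∀ j : Fin n, ((ins v w) j.succ < (ins v w) 0 ↔ (w j : ℕ) < (v:ℕ)) := by
    intro j
    rw [ins_zero, ins_succ, Fin.lt_def, succAbove_val]
    split_ifs with h
    · exact ⟨fun _ => h, fun _ => h⟩
    · exact ⟨fun hc => by omega, fun hc => by omega⟩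
  have hltss : ∀ i j : Fin n, ((ins v w) j.succ < (ins v w) i.succ ↔ w j < w i) := by
    intro i j
    rw [ins_succ, ins_succ]
    exact Fin.succAbove_lt_succAbove_iff
  have hprod : oddLA n w
      = ∑ i : Fin n, ∑ j : Fin n,
          (if (i < j ∧ w j < w i ∧ (i:ℕ) % 2 ≠ (j:ℕ) % 2) then (1:ℕ) else 0) := by
    unfold oddLA
    rw [Finset.card_filter, Fintype.sum_prod_type]
  have hexp : oddLA (n+1) (ins v w)
      = (∑ j : Fin (n+1), if ((0:Fin (n+1)) < j ∧ (ins v w) j < (ins v w) 0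
            ∧ ((0:Fin (n+1)):ℕ) % 2 ≠ (j:ℕ) % 2) then (1:ℕ) else 0)
        + ∑ i : Fin n, ∑ j : Fin (n+1),
            (if (i.succ < j ∧ (ins v w) j < (ins v w) i.succ
              ∧ ((i.succ : Fin (n+1)):ℕ) % 2 ≠ (j:ℕ) % 2) then (1:ℕ) else 0) := by
    unfold oddLA
    rw [Finset.card_filter, Fintype.sum_prod_type, Fin.sum_univ_succ]
  have hrow0 : (∑ j : Fin (n+1), if ((0:Fin (n+1)) < j ∧ (ins v w) j < (ins v w) 0
        ∧ ((0:Fin (n+1)):ℕ) % 2 ≠ (j:ℕ) % 2) then (1:ℕ) else 0)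
      = (Finset.univ.filter
          (fun j : Fin n => (w j:ℕ) < (v:ℕ) ∧ (j:ℕ) % 2 = 0)).card := by
    rw [Fin.sum_univ_succ, if_neg (by simp), zero_add, Finset.card_filter]
    apply Finset.sum_congr rfl
    intro j _
    apply if_congr _ rfl rfl
    constructor
    · rintro ⟨-, h2, h3⟩
      refine ⟨(hlt0 j).mp h2, ?_⟩
      simp only [Fin.val_zero, Fin.val_succ] at h3
      omega
    · rintro ⟨h1, h2⟩
      refine ⟨Fin.succ_pos j, (hlt0 j).mpr h1, ?_⟩
      simp only [Fin.val_zero, Fin.val_succ]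
      omega
  have hrows : (∑ i : Fin n, ∑ j : Fin (n+1),
      (if (i.succ < j ∧ (ins v w) j < (ins v w) i.succ
        ∧ ((i.succ : Fin (n+1)):ℕ) % 2 ≠ (j:ℕ) % 2) then (1:ℕ) else 0))
      = ∑ i : Fin n, ∑ j : Fin n,
          (if (i < j ∧ w j < w i ∧ (i:ℕ) % 2 ≠ (j:ℕ) % 2) then (1:ℕ) else 0) := by
    apply Finset.sum_congr rfl
    intro i _
    rw [Fin.sum_univ_succ, if_neg (by simp), zero_add]
    apply Finset.sum_congr rfl
    intro j _
    apply if_congr _ rfl rfl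
    rw [Fin.succ_lt_succ_iff, hltss i j, Fin.val_succ, Fin.val_succ]
    constructor
    · rintro ⟨h1, h2, h3⟩
      exact ⟨h1, h2, by omega⟩
    · rintro ⟨h1, h2, h3⟩
      exact ⟨h1, h2, by omega⟩
  rw [hexp, hrow0, hrows, ← hprod]

lemma evset_succ (n : ℕ) : evset (n+1) =
    insert 0 ((Finset.univ.filter (fun j : Fin n => (j:ℕ) % 2 = 1)).image Fin.succ) := by
  ext i
  simp only [evset, Finset.mem_filter, Finset.mem_univ, true_and, Finset.mem_insert,
    Finset.mem_image]
  cases i using Fin.cases with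
  | zero => simp
  | succ j =>
    simp only [Fin.val_succ]
    constructor
    · intro h
      right
      exact ⟨j, by omega, rfl⟩
    · rintro (h | ⟨j', hj', hj'eq⟩)
      · exact absurd h (Fin.succ_ne_zero j)
      · have hj2 : j' = j := Fin.succ_injective n hj'eq
        subst hj2
        omega

lemma eim_ins {n : ℕ} (v : Fin (n+1)) (w : Equiv.Perm (Fin n)) :
    eim (ins v w) = insert (v:ℕ)
      ((Finset.univ.filter (fun j : Fin n => (j:ℕ) % 2 = 1)).image
        (fun j => if ((w j : ℕ) < (v:ℕ)) then (w j:ℕ) else (w j:ℕ)+1)) := by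
  unfold eim
  rw [evset_succ, Finset.image_insert, Finset.image_image]
  congr 1
  apply Finset.image_congr
  intro j _
  show ((ins v w) (Fin.succ j) : ℕ) = _
  rw [ins_succ, succAbove_val]

def oim {n : ℕ} (w : Equiv.Perm (Fin n)) : Finset ℕ :=
  (Finset.univ.filter (fun j : Fin n => (j:ℕ) % 2 = 1)).image (fun j => (w j : ℕ))

lemma oim_compl {n : ℕ} (w : Equiv.Perm (Fin n)) :
    oim w = Finset.range n \ eim w := by
  ext x
  simp only [oim, eim, evset, Finset.mem_image, Finset.mem_filter, Finset.mem_univ,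
    true_and, Finset.mem_sdiff, Finset.mem_range]
  constructor
  · rintro ⟨j, hj, rfl⟩
    refine ⟨(w j).is_lt, ?_⟩
    rintro ⟨i, hi, hvi⟩
    have hij : i = j := w.injective (Fin.ext hvi)
    subst hij
    omega
  · rintro ⟨hx, hne⟩
    have hwj : w (w⁻¹ ⟨x, hx⟩) = ⟨x, hx⟩ := w.apply_symm_apply _
    by_cases hj : ((w⁻¹ ⟨x, hx⟩ : Fin n):ℕ) % 2 = 0
    · exact absurd ⟨w⁻¹ ⟨x, hx⟩, hj, by rw [hwj]⟩ hne
    · exact ⟨w⁻¹ ⟨x, hx⟩, by omega, by rw [hwj]⟩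

lemma class_iff {n : ℕ} {E : Finset ℕ} (hE : E ⊆ Finset.range (n+1)) (v : Fin (n+1))
    (hv : (v:ℕ) ∈ E) (w : Equiv.Perm (Fin n)) :
    eim (ins v w) = E ↔ eim w = innerE E (v:ℕ) n := by
  have hvn : (v:ℕ) ≤ n := Fin.is_le v
  rw [eim_ins]
  have himg : (Finset.univ.filter (fun j : Fin n => (j:ℕ) % 2 = 1)).image
        (fun j => if ((w j : ℕ) < (v:ℕ)) then (w j:ℕ) else (w j:ℕ)+1)
      = (oim w).image (fun u => if u < (v:ℕ) then u else u+1) := by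
    rw [oim, Finset.image_image]
    apply Finset.image_congr
    intro j _
    rfl
  rw [himg]
  set S := (oim w).image (fun u => if u < (v:ℕ) then u else u+1) with hS
  have hvS : (v:ℕ) ∉ S := by
    rw [hS]
    simp only [Finset.mem_image]
    rintro ⟨u, hu, he⟩
    split_ifs at he <;> omega
  have step1 : insert (v:ℕ) S = E ↔ S = E.erase (v:ℕ) := by
    constructor
    · intro h
      ext x
      rw [Finset.mem_erase]
      constructor
      · intro hxS
        refine ⟨fun hc => hvS (hc ▸ hxS), ?_⟩
        rw [← h]
        exact Finset.mem_insert_of_mem hxS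
      · rintro ⟨hxv, hxE⟩
        rw [← h] at hxE
        rcases Finset.mem_insert.mp hxE with hc | hc
        · exact absurd hc hxv
        · exact hc
    · intro h
      rw [h, Finset.insert_erase hv]
  have step2 : S = E.erase (v:ℕ) ↔
      oim w = (E.erase (v:ℕ)).image (fun u => if u < (v:ℕ) then u else u - 1) := by
    constructor
    · intro h
      rw [← h, hS, Finset.image_image]
      symm
      calc (oim w).image ((fun u => if u < (v:ℕ) then u else u - 1)
              ∘ (fun u => if u < (v:ℕ) then u else u+1))
          = (oim w).image id := by
            apply Finset.image_congr
            intro u _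
            simp only [Function.comp_apply, id_eq]
            split_ifs <;> omega
        _ = oim w := Finset.image_id
    · intro h
      rw [hS, h, Finset.image_image]
      calc (E.erase (v:ℕ)).image ((fun u => if u < (v:ℕ) then u else u+1)
              ∘ (fun u => if u < (v:ℕ) then u else u - 1))
          = (E.erase (v:ℕ)).image id := by
            apply Finset.image_congr
            intro u hu
            have hune : u ≠ (v:ℕ) := (Finset.mem_erase.mp hu).1
            simp only [Function.comp_apply, id_eq]
            split_ifs <;> omega
        _ = E.erase (v:ℕ) := Finset.image_id
  have hF : (E.erase (v:ℕ)).image (fun u => if u < (v:ℕ) then u else u - 1)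
      ⊆ Finset.range n := by
    intro x hx
    simp only [Finset.mem_image, Finset.mem_erase] at hx
    obtain ⟨u, ⟨hune, huE⟩, rfl⟩ := hx
    have hun : u < n + 1 := Finset.mem_range.mp (hE huE)
    rw [Finset.mem_range]
    split_ifs <;> omega
  have step3 : (oim w = (E.erase (v:ℕ)).image (fun u => if u < (v:ℕ) then u else u - 1))
      ↔ eim w = innerE E (v:ℕ) n := by
    rw [oim_compl, innerE]
    constructor
    · intro h
      rw [← h, Finset.sdiff_sdiff_self_left, Finset.inter_eq_right.mpr (eim_subset_range w)]
    · intro h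
      rw [h, Finset.sdiff_sdiff_self_left, Finset.inter_eq_right.mpr hF]
  rw [step1, step2, step3]

lemma dstat_eval {n : ℕ} (w : Equiv.Perm (Fin n)) (v : Fin (n+1)) {E : Finset ℕ}
    (hw : eim w = innerE E (v:ℕ) n) :
    (Finset.univ.filter (fun j : Fin n => (w j:ℕ) < (v:ℕ) ∧ (j:ℕ) % 2 = 0)).card
      = ((Finset.range (v:ℕ)) \ E).card := by
  have hvn : (v:ℕ) ≤ n := Fin.is_le v
  have hinj : Function.Injective (fun j : Fin n => (w j : ℕ)) :=
    fun a b h => w.injective (Fin.ext h)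
  have h1 : (Finset.univ.filter
        (fun j : Fin n => (w j:ℕ) < (v:ℕ) ∧ (j:ℕ) % 2 = 0)).image (fun j => (w j:ℕ))
      = (eim w) ∩ Finset.range (v:ℕ) := by
    ext x
    simp only [Finset.mem_image, Finset.mem_filter, Finset.mem_univ, true_and,
      Finset.mem_inter, Finset.mem_range, eim, evset]
    constructor
    · rintro ⟨j, ⟨hlt, hpar⟩, rfl⟩
      exact ⟨⟨j, by simpa using hpar, rfl⟩, hlt⟩
    · rintro ⟨⟨j, hj, rfl⟩, hlt⟩
      refine ⟨j, ⟨hlt, ?_⟩, rfl⟩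
      simpa using hj
  have h2 : (eim w) ∩ Finset.range (v:ℕ) = (Finset.range (v:ℕ)) \ E := by
    rw [hw]
    ext x
    simp only [Finset.mem_inter, Finset.mem_range, Finset.mem_sdiff, mem_innerE]
    constructor
    · rintro ⟨⟨hxn, hno⟩, hxv⟩
      exact ⟨hxv, fun hxE => hno (Or.inl ⟨hxv, hxE⟩)⟩
    · rintro ⟨hxv, hxnE⟩
      refine ⟨⟨by omega, ?_⟩, hxv⟩
      rintro (⟨h1', h2'⟩ | ⟨h1', h2'⟩)
      · exact hxnE h2'
      · omega
  rw [← Finset.card_image_of_injective _ hinj, h1, h2]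

lemma Qcl_eq (n : ℕ) (E : Finset ℕ) : Qcl n E = ∑ σ : Equiv.Perm (Fin n),
    if eim σ = E then ((-1 : Polynomial ℤ)) ^ (ellA n σ) * X ^ (oddLA n σ) else 0 := by
  unfold Qcl gfA
  apply Finset.sum_congr rfl
  intro σ _
  split_ifs with h1
  · rfl
  · rfl

lemma dec (n : ℕ) (E : Finset ℕ) (hE : E ⊆ Finset.range (n+1)) :
    Qcl (n+1) E = ∑ v : Fin (n+1),
      if (v:ℕ) ∈ E then
        ((-1 : Polynomial ℤ)) ^ (v:ℕ) * X ^ ((Finset.range (v:ℕ) \ E).card)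
          * Qcl n (innerE E (v:ℕ) n)
      else 0 := by
  have hL : Qcl (n+1) E = ∑ p : Fin (n+1) × Equiv.Perm (Fin n),
      (if eim (ins p.1 p.2) = E
        then ((-1:Polynomial ℤ))^(ellA (n+1) (ins p.1 p.2)) * X^(oddLA (n+1) (ins p.1 p.2))
        else 0) := by
    rw [Qcl_eq]
    exact ((ins_bijective n).sum_comp _).symm
  rw [hL, Fintype.sum_prod_type]
  apply Finset.sum_congr rfl
  intro v _
  show (∑ w : Equiv.Perm (Fin n), if eim (ins v w) = E
      then ((-1:Polynomial ℤ))^(ellA (n+1) (ins v w)) * X^(oddLA (n+1) (ins v w)) else 0) = _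
  by_cases hv : (v:ℕ) ∈ E
  · rw [if_pos hv, Qcl_eq, Finset.mul_sum]
    apply Finset.sum_congr rfl
    intro w _
    by_cases hw : eim w = innerE E (v:ℕ) n
    · rw [if_pos ((class_iff hE v hv w).mpr hw), if_pos hw,
        ellA_ins, oddLA_ins, dstat_eval w v hw, pow_add, pow_add]
      ring
    · rw [if_neg (fun hc => hw ((class_iff hE v hv w).mp hc)), if_neg hw, mul_zero]
  · rw [if_neg hv]
    apply Finset.sum_eq_zero
    intro w _
    apply if_neg
    intro hc
    apply hv
    rw [← hc, eim_ins]
    exact Finset.mem_insert_self _ _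

lemma mem_EvensF {n x : ℕ} : x ∈ EvensF n ↔ x < n ∧ x % 2 = 0 := by
  simp [EvensF]

lemma mem_OddsF {n x : ℕ} : x ∈ OddsF n ↔ x < n ∧ x % 2 = 1 := by
  simp [OddsF]

lemma inst_i (m : ℕ) : Qcl (2*m+2) (EvensF (2*m+2)) = Qcl (2*m+1) (EvensF (2*m+1)) := by
  have h := dec (2*m+1) (EvensF (2*m+2)) (by
    intro x hx
    rw [mem_EvensF] at hx
    rw [Finset.mem_range]
    omega)
  rw [show Qcl (2*m+2) (EvensF (2*m+2)) = Qcl (2*m+1+1) (EvensF (2*m+2)) from rfl, h]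
  rw [← Finset.sum_subset (Finset.subset_univ {(0 : Fin (2*m+1+1))}) ?_]
  · rw [Finset.sum_singleton,
      if_pos (show ((0 : Fin (2*m+1+1)):ℕ) ∈ EvensF (2*m+2) by
        show (0:ℕ) ∈ EvensF (2*m+2)
        rw [mem_EvensF]; omega)]
    have hA1 : innerE (EvensF (2*m+2)) ((0 : Fin (2*m+1+1)):ℕ) (2*m+1)
        = EvensF (2*m+1) := by
      show innerE (EvensF (2*m+2)) 0 (2*m+1) = EvensF (2*m+1)
      ext x
      simp only [mem_innerE, mem_EvensF]
      omega
    rw [hA1]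
    simp
  · intro v _ hv0
    by_cases hvE : (v:ℕ) ∈ EvensF (2*m+2)
    · rw [if_pos hvE]
      obtain ⟨hv1, hv2⟩ := mem_EvensF.mp hvE
      have hvne : (v:ℕ) ≠ 0 := by
        intro hc
        apply hv0
        rw [Finset.mem_singleton]
        exact Fin.ext (by rw [hc, Fin.val_zero])
      have hswap : Qcl (2*m+1) (innerE (EvensF (2*m+2)) (v:ℕ) (2*m+1)) = 0 := by
        apply swap_zero (u := (v:ℕ) - 1) (by omega)
        simp only [mem_innerE, mem_EvensF]
        omega
      rw [hswap, mul_zero]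
    · rw [if_neg hvE]

lemma inst_ii (m : ℕ) :
    Qcl (2*m+2) (OddsF (2*m+2)) = -(X^(m+1) * Qcl (2*m+1) (EvensF (2*m+1))) := by
  have h := dec (2*m+1) (OddsF (2*m+2)) (by
    intro x hx
    rw [mem_OddsF] at hx
    rw [Finset.mem_range]
    omega)
  rw [show Qcl (2*m+2) (OddsF (2*m+2)) = Qcl (2*m+1+1) (OddsF (2*m+2)) from rfl, h]
  rw [← Finset.sum_subset
    (Finset.subset_univ {(⟨2*m+1, by omega⟩ : Fin (2*m+1+1))}) ?_]
  · rw [Finset.sum_singleton,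
      if_pos (show ((⟨2*m+1, by omega⟩ : Fin (2*m+1+1)):ℕ) ∈ OddsF (2*m+2) by
        show (2*m+1:ℕ) ∈ OddsF (2*m+2)
        rw [mem_OddsF]; omega)]
    have hsign : ((-1:Polynomial ℤ))^(((⟨2*m+1, by omega⟩ : Fin (2*m+1+1)):ℕ)) = -1 := by
      show ((-1:Polynomial ℤ))^(2*m+1) = -1
      rw [pow_succ, pow_mul]
      norm_num
    have hcard : (Finset.range (((⟨2*m+1, by omega⟩ : Fin (2*m+1+1)):ℕ))
        \ OddsF (2*m+2)).card = m+1 := by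
      have hset : Finset.range (2*m+1) \ OddsF (2*m+2) = EvensF (2*m+1) := by
        ext x
        simp only [Finset.mem_sdiff, Finset.mem_range, mem_OddsF, mem_EvensF]
        omega
      show (Finset.range (2*m+1) \ OddsF (2*m+2)).card = m+1
      rw [hset, cardEvensF]
      omega
    have hinner : innerE (OddsF (2*m+2)) (((⟨2*m+1, by omega⟩ : Fin (2*m+1+1)):ℕ)) (2*m+1)
        = EvensF (2*m+1) := by
      show innerE (OddsF (2*m+2)) (2*m+1) (2*m+1) = EvensF (2*m+1)
      ext x
      simp only [mem_innerE, mem_OddsF, mem_EvensF]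
      omega
    rw [hsign, hcard, hinner]
    ring
  · intro v _ hv0
    by_cases hvE : (v:ℕ) ∈ OddsF (2*m+2)
    · rw [if_pos hvE]
      obtain ⟨hv1, hv2⟩ := mem_OddsF.mp hvE
      have hvne : (v:ℕ) ≠ 2*m+1 := by
        intro hc
        apply hv0
        rw [Finset.mem_singleton]
        exact Fin.ext (by rw [hc])
      have hswap : Qcl (2*m+1) (innerE (OddsF (2*m+2)) (v:ℕ) (2*m+1)) = 0 := by
        apply swap_zero (u := (v:ℕ) - 1) (by omega)
        simp only [mem_innerE, mem_OddsF]
        omega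
      rw [hswap, mul_zero]
    · rw [if_neg hvE]

lemma inst_iii (m : ℕ) (hm : 1 ≤ m) :
    Qcl (2*m+1) (EvensF (2*m+1))
      = Qcl (2*m) (EvensF (2*m)) + X^m * Qcl (2*m) (OddsF (2*m)) := by
  have h := dec (2*m) (EvensF (2*m+1)) (by
    intro x hx
    rw [mem_EvensF] at hx
    rw [Finset.mem_range]
    omega)
  rw [show Qcl (2*m+1) (EvensF (2*m+1)) = Qcl (2*m+1) (EvensF (2*m+1)) from rfl, h]
  have hne : (0 : Fin (2*m+1)) ≠ (⟨2*m, by omega⟩ : Fin (2*m+1)) := by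
    intro hc
    have := congrArg Fin.val hc
    simp only [Fin.val_zero] at this
    omega
  rw [← Finset.sum_subset
    (Finset.subset_univ {(0 : Fin (2*m+1)), (⟨2*m, by omega⟩ : Fin (2*m+1))}) ?_]
  · rw [Finset.sum_pair hne]
    rw [if_pos (show ((0 : Fin (2*m+1)):ℕ) ∈ EvensF (2*m+1) by
        show (0:ℕ) ∈ EvensF (2*m+1)
        rw [mem_EvensF]; omega),
      if_pos (show ((⟨2*m, by omega⟩ : Fin (2*m+1)):ℕ) ∈ EvensF (2*m+1) by
        show (2*m:ℕ) ∈ EvensF (2*m+1)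
        rw [mem_EvensF]; omega)]
    have hB1 : innerE (EvensF (2*m+1)) ((0 : Fin (2*m+1)):ℕ) (2*m) = EvensF (2*m) := by
      show innerE (EvensF (2*m+1)) 0 (2*m) = EvensF (2*m)
      ext x
      simp only [mem_innerE, mem_EvensF]
      omega
    have hsign : ((-1:Polynomial ℤ))^(((⟨2*m, by omega⟩ : Fin (2*m+1)):ℕ)) = 1 := by
      show ((-1:Polynomial ℤ))^(2*m) = 1
      rw [pow_mul]
      norm_num
    have hcard : (Finset.range (((⟨2*m, by omega⟩ : Fin (2*m+1)):ℕ))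
        \ EvensF (2*m+1)).card = m := by
      have hset : Finset.range (2*m) \ EvensF (2*m+1) = OddsF (2*m) := by
        ext x
        simp only [Finset.mem_sdiff, Finset.mem_range, mem_OddsF, mem_EvensF]
        omega
      show (Finset.range (2*m) \ EvensF (2*m+1)).card = m
      rw [hset, cardOddsF]
      omega
    have hinner : innerE (EvensF (2*m+1)) (((⟨2*m, by omega⟩ : Fin (2*m+1)):ℕ)) (2*m)
        = OddsF (2*m) := by
      show innerE (EvensF (2*m+1)) (2*m) (2*m) = OddsF (2*m)
      ext x
      simp only [mem_innerE, mem_EvensF, mem_OddsF]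
      omega
    rw [hB1, hsign, hcard, hinner]
    simp
  · intro v _ hv0
    by_cases hvE : (v:ℕ) ∈ EvensF (2*m+1)
    · rw [if_pos hvE]
      obtain ⟨hv1, hv2⟩ := mem_EvensF.mp hvE
      have hvne0 : (v:ℕ) ≠ 0 := by
        intro hc
        apply hv0
        rw [Finset.mem_insert]
        left
        exact Fin.ext (by rw [hc, Fin.val_zero])
      have hvne2 : (v:ℕ) ≠ 2*m := by
        intro hc
        apply hv0
        rw [Finset.mem_insert, Finset.mem_singleton]
        right
        exact Fin.ext (by rw [hc])
      have hswap : Qcl (2*m) (innerE (EvensF (2*m+1)) (v:ℕ) (2*m)) = 0 := by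
        apply swap_zero (u := (v:ℕ) - 1) (by omega)
        simp only [mem_innerE, mem_EvensF]
        omega
      rw [hswap, mul_zero]
    · rw [if_neg hvE]

lemma inst_iv (m : ℕ) : Qcl (2*m+1) (OddsF (2*m+1)) = 0 := by
  apply Qcl_card_ne
  rw [cardOddsF]
  omega

lemma base_P : Qcl 1 (EvensF 1) = 1 := by
  rw [Qcl_eq]
  rw [Fintype.sum_subsingleton _ (1 : Equiv.Perm (Fin 1))]
  rw [if_pos (by decide), show ellA 1 1 = 0 by decide, show oddLA 1 1 = 0 by decide]
  simp

lemma P_odd : ∀ m : ℕ, Qcl (2*m+1) (EvensF (2*m+1))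
    = ∏ j ∈ Finset.Icc 1 m, (1 - X^(2*j) : Polynomial ℤ) := by
  intro m
  induction m with
  | zero =>
    show Qcl 1 (EvensF 1) = _
    rw [base_P, Finset.Icc_eq_empty (by omega), Finset.prod_empty]
  | succ k ih =>
    have h3 : Qcl (2*k+3) (EvensF (2*k+3))
        = Qcl (2*k+2) (EvensF (2*k+2)) + X^(k+1) * Qcl (2*k+2) (OddsF (2*k+2)) :=
      inst_iii (k+1) (by omega)
    show Qcl (2*k+3) (EvensF (2*k+3)) = _
    rw [h3, inst_i k, inst_ii k, ih, Finset.prod_Icc_succ_top (by omega)]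
    ring


/-- Corollary 4.4. For `n = 2m+1`,
`∑_{σ ∈ S_n} (-1)^{ℓ(σ)} x^{L(σ)} = ∏_{j=1}^{m} (1-x^{2j})`, and for `n = 2m` (`m ≥ 1`),
`∑_{σ ∈ S_n} (-1)^{ℓ(σ)} x^{L(σ)} = (1-x^m) ∏_{j=1}^{m-1} (1-x^{2j})`. -/
theorem statement12 (m : ℕ) :
    gfA (2 * m + 1) (fun _ => True) =
      ∏ j ∈ Finset.Icc 1 m, (1 - X ^ (2 * j)) ∧
    (1 ≤ m → gfA (2 * m) (fun _ => True) =
      (1 - X ^ m) * ∏ j ∈ Finset.Icc 1 (m - 1), (1 - X ^ (2 * j))) := by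
  constructor
  · rw [F_eq_P_add_M (by omega), P_odd m, inst_iv m, add_zero]
  · intro hm
    obtain ⟨k, rfl⟩ : ∃ k, m = k + 1 := ⟨m - 1, by omega⟩
    show gfA (2*k+2) (fun _ => True) = _
    rw [F_eq_P_add_M (by omega), inst_i k, inst_ii k, P_odd k,
      show (k+1-1) = k from rfl]
    ring
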